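/- Let B be a finite set of Boolean functions such that each of the unary negation ¬x and the constants false and true is computed by some term over B. Then there exists a term over B in the single variable x that computes ¬x and in which the variable x occurs exactly once. -/

import Mathlib

/-- A Boolean operator/function: an arity `n` together with a function `Bool^n → Bool`. -/
abbrev BOp : Type := Σ n : ℕ, (Fin n → Bool) → Bool

/-- Terms over Boolean functions, in variables `x_0, …, x_{n-1}`. -/
inductive BTerm (n : ℕ) : Type where
  | var : Fin n → BTerm n
  | app : (o : BOp) → (Fin o.1 → BTerm n) → BTerm n

/-- The Boolean function computed by a term. -/
def BTerm.eval {n : ℕ} (v : Fin n → Bool) : BTerm n → Bool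
  | .var i => v i
  | .app o ts => o.2 (fun j => BTerm.eval v (ts j))

/-- `t.over B` : the term `t` uses only functions from `B`. -/
def BTerm.over {n : ℕ} (B : Set BOp) : BTerm n → Prop
  | .var _ => True
  | .app o ts => o ∈ B ∧ ∀ j, BTerm.over B (ts j)

/-- Number of occurrences of the variable `x_i` in the syntax tree of a term. -/
def BTerm.count {n : ℕ} (i : Fin n) : BTerm n → ℕ
  | .var j => if j = i then 1 else 0
  | .app _ ts => ∑ j, BTerm.count i (ts j)

namespace Stmt14Aux

/-- Lift a closed term (no variables) to one variable. -/
def lift0 : BTerm 0 → BTerm 1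
  | .var i => i.elim0
  | .app o ts => .app o (fun j => lift0 (ts j))

theorem lift0_over {B : Set BOp} : ∀ t : BTerm 0, t.over B → (lift0 t).over B
  | .var i, _ => i.elim0
  | .app o ts, h => ⟨h.1, fun j => lift0_over (ts j) (h.2 j)⟩

theorem lift0_eval : ∀ (t : BTerm 0) (v : Fin 1 → Bool),
    (lift0 t).eval v = t.eval Fin.elim0
  | .var i, _ => i.elim0
  | .app o ts, v => by
      simp only [lift0, BTerm.eval]
      exact congrArg o.2 (funext fun j => lift0_eval (ts j) v)

theorem lift0_count : ∀ t : BTerm 0, (lift0 t).count 0 = 0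
  | .var i => i.elim0
  | .app o ts => by
      simp only [lift0, BTerm.count]
      exact Finset.sum_eq_zero fun j _ => lift0_count (ts j)

theorem path_cross (f : ℕ → Bool) (m : ℕ) (h : f 0 ≠ f m) :
    ∃ k, k < m ∧ f k = f 0 ∧ f (k + 1) ≠ f 0 := by
  induction m with
  | zero => exact absurd rfl h
  | succ m ih =>
    by_cases hm : f m = f 0
    · exact ⟨m, Nat.lt_succ_self m, hm, fun e => h e.symm⟩
    · obtain ⟨k, hk, h1, h2⟩ := ih (fun e => hm e.symm)
      exact ⟨k, hk.trans (Nat.lt_succ_self m), h1, h2⟩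

theorem bool_eq_of_ne {a b c : Bool} (h1 : a ≠ c) (h2 : b ≠ c) : a = b := by
  cases a <;> cases b <;> cases c <;> simp_all

theorem key (B : Set BOp) (cb : Bool → BTerm 1)
    (hcb : ∀ b, (cb b).over B ∧ (cb b).count 0 = 0 ∧ ∀ v, (cb b).eval v = b)
    (t : BTerm 1) (ht : t.over B) :
    t.eval (fun _ => false) = t.eval (fun _ => true) ∨
      ∃ s : BTerm 1, s.over B ∧ s.count 0 = 1 ∧ ∀ v, s.eval v = t.eval v := by
  revert ht
  induction t with
  | var i =>
    intro _
    right
    refine ⟨.var 0, trivial, by simp [BTerm.count], fun v => ?_⟩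
    have hi : i = 0 := Subsingleton.elim _ _
    simp [BTerm.eval, hi]
  | app o ts ih =>
    intro ht
    obtain ⟨hoB, hts⟩ := ht
    by_cases hc : (BTerm.app o ts).eval (fun _ => false) = (BTerm.app o ts).eval (fun _ => true)
    · exact Or.inl hc
    right
    -- the path through the hypercube
    set q : ℕ → Fin o.1 → Bool := fun k j =>
      if (j : ℕ) < k then (ts j).eval (fun _ => true) else (ts j).eval (fun _ => false) with hq
    have hq0 : q 0 = fun j => (ts j).eval (fun _ => false) := by
      funext j; simp [hq]
    have hqm : q o.1 = fun j => (ts j).eval (fun _ => true) := by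
      funext j; simp [hq, j.isLt]
    have hne : o.2 (q 0) ≠ o.2 (q o.1) := by
      rw [hq0, hqm]
      simpa [BTerm.eval] using hc
    obtain ⟨k, hkm, hk1, hk2⟩ := path_cross (fun k => o.2 (q k)) o.1 hne
    set kf : Fin o.1 := ⟨k, hkm⟩ with hkf
    -- the subterm at the crossing is nonconstant
    have hdiff : ¬ (ts kf).eval (fun _ => false) = (ts kf).eval (fun _ => true) := by
      intro he
      apply hk2
      rw [← hk1]
      show o.2 (q (k + 1)) = o.2 (q k)
      refine congrArg o.2 (funext fun j => ?_)
      simp only [hq]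
      rcases lt_trichotomy (j : ℕ) k with h | h | h
      · simp [h, Nat.lt_succ_of_lt h]
      · have hj : j = kf := Fin.ext h
        subst hj
        simp [h, he]
      · have h1 : ¬ (j : ℕ) < k := by omega
        have h2 : ¬ (j : ℕ) < k + 1 := by omega
        simp [h1, h2]
    rcases ih kf (hts kf) with hconst | ⟨s, hsov, hscount, hseval⟩
    · exact absurd hconst hdiff
    -- build the new term
    set us : Fin o.1 → BTerm 1 := fun j => if j = kf then s else cb (q k j) with hus
    refine ⟨BTerm.app o us, ⟨hoB, fun j => ?_⟩, ?_, ?_⟩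
    · by_cases h : j = kf <;> simp [hus, h, hsov, (hcb _).1]
    · show (∑ j, (us j).count 0) = 1
      have hcnt : ∀ j, (us j).count 0 = if j = kf then 1 else 0 := by
        intro j
        by_cases h : j = kf <;> simp [hus, h, hscount, (hcb _).2.1]
      rw [Finset.sum_congr rfl fun j _ => hcnt j]
      simp
    · -- evaluation
      have hval : ∀ v, (fun j => (us j).eval v)
          = fun j => if j = kf then (ts kf).eval v else q k j := by
        intro v; funext j
        by_cases h : j = kf <;> simp [hus, h, hseval, (hcb _).2.2]
      have hvf : (BTerm.app o us).eval (fun _ => false) = o.2 (q k) := by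
        show o.2 (fun j => (us j).eval (fun _ => false)) = o.2 (q k)
        rw [hval]
        refine congrArg o.2 (funext fun j => ?_)
        by_cases h : j = kf
        · subst h; simp [hq, hkf]
        · simp [h]
      have hvt : (BTerm.app o us).eval (fun _ => true) = o.2 (q (k + 1)) := by
        show o.2 (fun j => (us j).eval (fun _ => true)) = o.2 (q (k + 1))
        rw [hval]
        refine congrArg o.2 (funext fun j => ?_)
        by_cases h : j = kf
        · subst h; simp [hq, hkf]
        · have hjk : (j : ℕ) ≠ k := fun e => h (Fin.ext e)
          have : ((j : ℕ) < k + 1) = ((j : ℕ) < k) := by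
            simp only [eq_iff_iff]; omega
          simp [h, hq, this]
      intro v
      have hv : v = fun _ => v 0 := funext fun i => by rw [Subsingleton.elim i 0]
      rw [hv]
      cases hv0 : v 0
      · rw [hvf, hk1]
        show o.2 (q 0) = (BTerm.app o ts).eval (fun _ => false)
        rw [hq0]; rfl
      · rw [hvt]
        have hL : o.2 (q (k + 1)) ≠ o.2 (q 0) := hk2
        have hR : (BTerm.app o ts).eval (fun _ => true) ≠ o.2 (q 0) := by
          rw [hq0]
          intro e
          exact hc e.symm
        exact bool_eq_of_ne hL hR

end Stmt14Aux

/-- if `B` is a finite set of Boolean functions such that unary negation and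
the constants `false` and `true` are each computed by some term over `B`, then some term
over `B` computes `¬x` with the variable `x` occurring exactly once. -/
theorem stmt_14 (B : Set BOp) (hfin : B.Finite)
    (hneg : ∃ t : BTerm 1, t.over B ∧ ∀ v, t.eval v = !(v 0))
    (hfalse : ∃ t : BTerm 0, t.over B ∧ ∀ v, t.eval v = false)
    (htrue : ∃ t : BTerm 0, t.over B ∧ ∀ v, t.eval v = true) :
    ∃ t : BTerm 1, t.over B ∧ (∀ v, t.eval v = !(v 0)) ∧ t.count 0 = 1 := by
  obtain ⟨tn, htnB, htn⟩ := hneg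
  obtain ⟨tf, htfB, htf⟩ := hfalse
  obtain ⟨tt', httB, htt⟩ := htrue
  set cb : Bool → BTerm 1 := fun b => if b then Stmt14Aux.lift0 tt' else Stmt14Aux.lift0 tf
    with hcbdef
  have hcb : ∀ b, (cb b).over B ∧ (cb b).count 0 = 0 ∧ ∀ v, (cb b).eval v = b := by
    intro b
    cases b <;>
      simp [hcbdef, Stmt14Aux.lift0_over, Stmt14Aux.lift0_eval, Stmt14Aux.lift0_count,
        htfB, httB, htf, htt]
  rcases Stmt14Aux.key B cb hcb tn htnB with hconst | ⟨s, h1, h2, h3⟩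
  · simp [htn] at hconst
  · exact ⟨s, h1, fun v => by rw [h3, htn], h2⟩
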